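/- Let G : ℕ → ℂ satisfy G(i+2) = G(i+1) + G(i) for all i ≥ 0, and let w ∈ ℂ with w⁴ + 3w³ − 6w² − 3w + 1 ≠ 0. Then for every nonnegative integer k, ∑_{j=0}^{k} w^j · G(j)³ = ( (3w³ − 6w² − 3w + 1)·G(0)³ − (6w³ + 3w² − w)·G(1)³ − (3w³ − w²)·G(2)³ + w³·G(3)³ − (3w³ − 6w² − 3w + 1)·w^{k+1}·G(k+1)³ + (6w² + 3w − 1)·w^{k+2}·G(k+2)³ + (3w − 1)·w^{k+3}·G(k+3)³ − w^{k+4}·G(k+4)³ ) / (w⁴ + 3w³ − 6w² − 3w + 1). -/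

import Mathlib

theorem weighted_cube_sum (G : ℕ → ℂ) (hG : ∀ i, G (i + 2) = G (i + 1) + G i)
    (w : ℂ) (hw : w ^ 4 + 3 * w ^ 3 - 6 * w ^ 2 - 3 * w + 1 ≠ 0) (k : ℕ) :
    ∑ j ∈ Finset.range (k + 1), w ^ j * G j ^ 3 =
      ((3 * w ^ 3 - 6 * w ^ 2 - 3 * w + 1) * G 0 ^ 3
        - (6 * w ^ 3 + 3 * w ^ 2 - w) * G 1 ^ 3
        - (3 * w ^ 3 - w ^ 2) * G 2 ^ 3
        + w ^ 3 * G 3 ^ 3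
        - (3 * w ^ 3 - 6 * w ^ 2 - 3 * w + 1) * w ^ (k + 1) * G (k + 1) ^ 3
        + (6 * w ^ 2 + 3 * w - 1) * w ^ (k + 2) * G (k + 2) ^ 3
        + (3 * w - 1) * w ^ (k + 3) * G (k + 3) ^ 3
        - w ^ (k + 4) * G (k + 4) ^ 3) / (w ^ 4 + 3 * w ^ 3 - 6 * w ^ 2 - 3 * w + 1) := by
  induction k with
  | zero =>
    rw [Finset.sum_range_one]
    have h2 : G 2 = G 1 + G 0 := hG 0
    have h3 : G 3 = G 2 + G 1 := hG 1
    have h4 : G 4 = G 3 + G 2 := hG 2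
    rw [h4, h3, h2, eq_div_iff hw] <;> ring
  | succ k ih =>
    rw [Finset.sum_range_succ, ih]
    have h3 : G (k + 3) = G (k + 2) + G (k + 1) := hG (k + 1)
    have h4 : G (k + 4) = G (k + 3) + G (k + 2) := hG (k + 2)
    have h5 : G (k + 5) = G (k + 4) + G (k + 3) := hG (k + 3)
    have e1 : k + 1 + 1 = k + 2 := by ring
    have e2 : k + 1 + 2 = k + 3 := by ring
    have e3 : k + 1 + 3 = k + 4 := by ring
    have e4 : k + 1 + 4 = k + 5 := by ring
    rw [e1, e2, e3, e4, h5, h4, h3, div_add' _ _ _ hw, div_eq_div_iff hw hw]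
    ring
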